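/- For every c > 0 and positive integer k there exists a constant C = C(c,k) > 0 such that: if a finite graph on N vertices has at least cN² edges and its edges are colored so that at each vertex at most k distinct colors appear among its incident edges, then some color class contains at least CN² edges. -/

import Mathlib

open Finset

/-- Graph Lemma: for every `c > 0` and `k` there is `C > 0` such that any graph on `N`
vertices with at least `cN²` edges, whose edges are colored with at most `k` colors
meeting at each vertex, has a monochromatic subgraph with at least `CN²` edges. -/
theorem stmt_15 (c : ℝ) (hc : 0 < c) (k : ℕ) (hk : 0 < k) :
    ∃ C : ℝ, 0 < C ∧
      ∀ (V : Type) [Fintype V] [DecidableEq V] (G : SimpleGraph V)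
        [DecidableRel G.Adj] (col : Sym2 V → ℕ),
        c * (Fintype.card V : ℝ) ^ 2 ≤ (G.edgeFinset.card : ℝ) →
        (∀ v : V, ((G.neighborFinset v).image fun w => col s(v, w)).card ≤ k) →
        ∃ m : ℕ, C * (Fintype.card V : ℝ) ^ 2 ≤
          ((G.edgeFinset.filter fun e => col e = m).card : ℝ) := by
  classical
  have hkR : (0:ℝ) < k := by exact_mod_cast hk
  refine ⟨c ^ 2 / (4 * k ^ 2), by positivity, ?_⟩
  intro V _ _ G _ col hE hloc
  by_contra hcon
  push_neg at hcon
  set C : ℝ := c ^ 2 / (4 * k ^ 2) with hC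
  set N : ℕ := Fintype.card V with hN
  -- N > 0
  have hNpos : 0 < N := by
    rcases Nat.eq_zero_or_pos N with h0 | h
    · exfalso
      have := hcon 0
      rw [h0] at this
      simp at this
      exact absurd (by positivity : (0:ℝ) ≤ ((G.edgeFinset.filter fun e => col e = 0).card : ℝ)) (not_le.mpr this)
    · exact h
  set T : Finset ℕ := G.edgeFinset.image col with hT
  set Vm : ℕ → Finset V := fun m => univ.filter (fun v => ∃ w, G.Adj v w ∧ col s(v, w) = m)
    with hVm
  -- Step A: edges partition by color
  have hA : G.edgeFinset.card = ∑ m ∈ T, (G.edgeFinset.filter fun e => col e = m).card :=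
    card_eq_sum_card_fiberwise (fun e he => mem_image_of_mem col he)
  -- Step B: a color class with s edges spans a vertex set of size t with s ≤ t²
  have hB : ∀ m, (G.edgeFinset.filter fun e => col e = m).card ≤ (Vm m).card ^ 2 := by
    intro m
    have hsub : (G.edgeFinset.filter fun e => col e = m) ⊆ (Vm m).sym2 := by
      intro e he
      rw [mem_filter, SimpleGraph.mem_edgeFinset] at he
      obtain ⟨he1, he2⟩ := he
      induction e with
      | _ a b =>
        rw [mk_mem_sym2_iff]
        have hadj : G.Adj a b := he1
        constructor
        · rw [hVm]; simp only [mem_filter, mem_univ, true_and]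
          exact ⟨b, hadj, he2⟩
        · rw [hVm]; simp only [mem_filter, mem_univ, true_and]
          refine ⟨a, hadj.symm, ?_⟩
          rwa [Sym2.eq_swap]
    calc (G.edgeFinset.filter fun e => col e = m).card ≤ (Vm m).sym2.card :=
          card_le_card hsub
      _ = Nat.choose ((Vm m).card + 1) 2 := card_sym2 _
      _ ≤ (Vm m).card ^ 2 := by
          rw [Nat.choose_two_right]
          simp only [Nat.add_sub_cancel]
          refine Nat.div_le_of_le_mul ?_
          nlinarith [Nat.le_self_pow (two_ne_zero) (Vm m).card]
  -- Step C: total vertex-incidences of colors is at most kN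
  have hCsum : ∑ m ∈ T, (Vm m).card ≤ k * N := by
    have swap : ∑ m ∈ T, (Vm m).card
        = ∑ v : V, (T.filter (fun m => ∃ w, G.Adj v w ∧ col s(v, w) = m)).card := by
      simp only [hVm, card_filter]
      rw [Finset.sum_comm]
    rw [swap]
    have hv : ∀ v : V, (T.filter (fun m => ∃ w, G.Adj v w ∧ col s(v, w) = m)).card ≤ k := by
      intro v
      refine le_trans (card_le_card ?_) (hloc v)
      intro m hm
      rw [mem_filter] at hm
      obtain ⟨-, w, hw, hcw⟩ := hm
      rw [mem_image]
      exact ⟨w, by rwa [SimpleGraph.mem_neighborFinset], hcw⟩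
    calc ∑ v : V, (T.filter (fun m => ∃ w, G.Adj v w ∧ col s(v, w) = m)).card
        ≤ ∑ _v : V, k := Finset.sum_le_sum (fun v _ => hv v)
      _ = k * N := by rw [Finset.sum_const, smul_eq_mul, hN, Fintype.card, mul_comm]
  -- Now the real arithmetic
  have hNR : (0:ℝ) < (N:ℝ) := by exact_mod_cast hNpos
  have key : ∀ m ∈ T, ((G.edgeFinset.filter fun e => col e = m).card : ℝ)
      ≤ ((Vm m).card : ℝ) * (c / (2 * k)) * N := by
    intro m _
    set s : ℝ := ((G.edgeFinset.filter fun e => col e = m).card : ℝ) with hs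
    set t : ℝ := ((Vm m).card : ℝ) with ht
    have hs0 : 0 ≤ s := Nat.cast_nonneg _
    have ht0 : 0 ≤ t := Nat.cast_nonneg _
    have h1 : s ≤ t ^ 2 := by rw [hs, ht]; exact_mod_cast hB m
    have h2 : s ≤ C * (N:ℝ) ^ 2 := le_of_lt (hcon m)
    have hCval : C * (N:ℝ) ^ 2 = (c / (2 * k) * N) ^ 2 := by
      rw [hC]; field_simp; ring
    have hsq : s ^ 2 ≤ (t * (c / (2 * k)) * N) ^ 2 := by
      have : s ^ 2 ≤ t ^ 2 * (C * (N:ℝ) ^ 2) := by nlinarith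
      rw [hCval] at this
      calc s ^ 2 ≤ t ^ 2 * (c / (2 * k) * N) ^ 2 := this
        _ = (t * (c / (2 * k)) * N) ^ 2 := by ring
    have hrhs0 : 0 ≤ t * (c / (2 * k)) * N := by positivity
    nlinarith
  have hsum : ((G.edgeFinset.card : ℝ))
      ≤ (c / (2 * k)) * N * (∑ m ∈ T, ((Vm m).card : ℝ)) := by
    rw [hA]
    push_cast
    calc ∑ m ∈ T, ((G.edgeFinset.filter fun e => col e = m).card : ℝ)
        ≤ ∑ m ∈ T, ((Vm m).card : ℝ) * (c / (2 * k)) * N := Finset.sum_le_sum key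
      _ = (c / (2 * k)) * N * (∑ m ∈ T, ((Vm m).card : ℝ)) := by
          rw [Finset.mul_sum]; apply Finset.sum_congr rfl; intros; ring
  have hsum2 : (∑ m ∈ T, ((Vm m).card : ℝ)) ≤ (k : ℝ) * N := by
    exact_mod_cast hCsum
  have hfinal : c * (N:ℝ) ^ 2 ≤ (c / 2) * (N:ℝ) ^ 2 := by
    calc c * (N:ℝ) ^ 2 ≤ (G.edgeFinset.card : ℝ) := hE
      _ ≤ (c / (2 * k)) * N * (∑ m ∈ T, ((Vm m).card : ℝ)) := hsum
      _ ≤ (c / (2 * k)) * N * ((k:ℝ) * N) := by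
          apply mul_le_mul_of_nonneg_left hsum2; positivity
      _ = (c / 2) * (N:ℝ) ^ 2 := by field_simp
  nlinarith [sq_nonneg (N:ℝ), mul_pos (mul_pos hc hNR) hNR]
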